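/- Fix λ > 10e. There exists a set E₁ ⊂ 𝕋^𝐝 which is a disjoint union of D-adic cubes, such that: (1) |E₁| ≤ C λ^{−2}; and (2) setting 𝔓_good = {𝔭 ∈ 𝔓 : I_𝔭 ⊄ E₁}, for every n ≥ 1 the set 𝔐_n of tiles in 𝔓_good that are maximal with respect to ≤ among those satisfying |Ē(𝔭)|/|I_𝔭| ≥ 2^{−n} satisfies ‖Σ_{𝔭∈𝔐_n} 1_{I_𝔭}‖_{L^∞(𝕋^𝐝)} ≤ C 2^n log(n+1) log(λ). Here C depends only on α, 𝐝 and d. -/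

import Mathlib

open MeasureTheory Set
open scoped ENNReal NNReal BigOperators

noncomputable section

/-- Anisotropic dilation `δ_r`. -/
def dil {dd : ℕ} (α : Fin dd → ℕ) (r : ℝ) (x : Fin dd → ℝ) : Fin dd → ℝ :=
  fun i => r ^ (α i) * x i

/-- An anisotropic `D`-adic cube, given by its scale `s` and position `k`. -/
structure DCube (dd : ℕ) where
  s : ℤ
  k : Fin dd → ℤ

/-- The cube `x + δ_{D^s}([0,1)^dd)` with `x = δ_{D^s}(k)`, as a subset of `ℝ^dd`. -/
def DCube.toSet {dd : ℕ} (α : Fin dd → ℕ) (D : ℕ) (J : DCube dd) : Set (Fin dd → ℝ) :=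
  {x | ∀ i, (D : ℝ) ^ (J.s * (α i : ℤ)) * J.k i ≤ x i ∧
            x i < (D : ℝ) ^ (J.s * (α i : ℤ)) * (J.k i + 1)}

/-- Membership in the grid `𝒟`: nonpositive scale and base point in `[0,1)^dd`. -/
def DCube.valid {dd : ℕ} (α : Fin dd → ℕ) (D : ℕ) (J : DCube dd) : Prop :=
  J.s ≤ 0 ∧ ∀ i, 0 ≤ J.k i ∧ (D : ℝ) ^ (J.s * (α i : ℤ)) * J.k i < 1

/-- The space `𝒬` of real polynomials of degree at most `d` without constant term. -/
def QSpace (dd d : ℕ) : Set (MvPolynomial (Fin dd) ℝ) :=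
  {Q | Q.totalDegree ≤ d ∧ MvPolynomial.coeff 0 Q = 0}

/-- `‖Q‖_I`. -/
def qnorm {dd : ℕ} (Q : MvPolynomial (Fin dd) ℝ) (I : Set (Fin dd → ℝ)) : ℝ :=
  ⨆ x ∈ I, ⨆ y ∈ I, |MvPolynomial.eval x Q - MvPolynomial.eval y Q|

/-- `B_I(Q, r)`. -/
def qball {dd : ℕ} (d : ℕ) (I : Set (Fin dd → ℝ)) (Q : MvPolynomial (Fin dd) ℝ) (r : ℝ) :
    Set (MvPolynomial (Fin dd) ℝ) :=
  {Q' ∈ QSpace dd d | qnorm (Q' - Q) I ≤ r}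

/-- A tile: a `D`-adic cube together with an uncertainty region and a central polynomial. -/
structure Tile (dd : ℕ) where
  I : DCube dd
  Q : Set (MvPolynomial (Fin dd) ℝ)
  c : MvPolynomial (Fin dd) ℝ

/-- The defining conditions of a tile. -/
def IsTile {dd : ℕ} (α : Fin dd → ℕ) (D d : ℕ) (s_min s_max : ℤ) (p : Tile dd) : Prop :=
  p.I.valid α D ∧ s_min ≤ p.I.s ∧ p.I.s ≤ s_max ∧ p.c ∈ p.Q ∧
  qball d (p.I.toSet α D) p.c 0.2 ⊆ p.Q ∧ p.Q ⊆ qball d (p.I.toSet α D) p.c 1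

/-- The order `𝔭 ≤ 𝔭'` on tiles. -/
def Tile.le {dd : ℕ} (α : Fin dd → ℕ) (D : ℕ) (p p' : Tile dd) : Prop :=
  p.I.toSet α D ⊆ p'.I.toSet α D ∧ p'.Q ⊆ p.Q

/-- The strict order `𝔭 < 𝔭'` on tiles. -/
def Tile.lt {dd : ℕ} (α : Fin dd → ℕ) (D : ℕ) (p p' : Tile dd) : Prop :=
  Tile.le α D p p' ∧ p.I.toSet α D ≠ p'.I.toSet α D

/-- The standing hypotheses on the collection `𝔓` of all tiles. -/
def GoodCollection {dd : ℕ} (α : Fin dd → ℕ) (D d : ℕ) (s_min s_max : ℤ)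
    (𝔓 : Set (Tile dd)) : Prop :=
  (∀ p ∈ 𝔓, IsTile α D d s_min s_max p) ∧
  (∀ I : DCube dd, I.valid α D → s_min ≤ I.s → I.s ≤ s_max →
    ∀ Q ∈ QSpace dd d, ∃ p ∈ 𝔓, p.I = I ∧ Q ∈ p.Q) ∧
  (∀ p ∈ 𝔓, ∀ p' ∈ 𝔓, p.I = p'.I → p ≠ p' → p.Q ∩ p'.Q = ∅) ∧
  (∀ p ∈ 𝔓, ∀ p' ∈ 𝔓, p.I.toSet α D ⊆ p'.I.toSet α D → p.Q ∩ p'.Q = ∅ ∨ p'.Q ⊆ p.Q)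

/-- `Ē(𝔭) = {x ∈ I_𝔭 : Q_x ∈ 𝒬(𝔭)}`. -/
def Ebar {dd : ℕ} (α : Fin dd → ℕ) (D : ℕ)
    (Qx : (Fin dd → ℝ) → MvPolynomial (Fin dd) ℝ) (p : Tile dd) : Set (Fin dd → ℝ) :=
  {x | x ∈ p.I.toSet α D ∧ Qx x ∈ p.Q}

/-- `𝔓_good`: tiles whose spatial cube is not contained in the exceptional set. -/
def goodTiles {dd : ℕ} (α : Fin dd → ℕ) (D : ℕ) (𝔓 : Set (Tile dd))
    (E₁ : Set (Fin dd → ℝ)) : Set (Tile dd) :=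
  {p ∈ 𝔓 | ¬ p.I.toSet α D ⊆ E₁}

/-- Tiles in `𝔓_good` with `|Ē(𝔭)|/|I_𝔭| ≥ 2^{-n}`. -/
def denseTiles {dd : ℕ} (α : Fin dd → ℕ) (D : ℕ)
    (Qx : (Fin dd → ℝ) → MvPolynomial (Fin dd) ℝ) (𝔓 : Set (Tile dd))
    (E₁ : Set (Fin dd → ℝ)) (n : ℕ) : Set (Tile dd) :=
  {p ∈ goodTiles α D 𝔓 E₁ |
    volume (p.I.toSet α D) ≤ 2 ^ n * volume (Ebar α D Qx p)}

/-- `𝔐_n`: the maximal tiles with respect to `≤` among `denseTiles`. -/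
def MaxTiles {dd : ℕ} (α : Fin dd → ℕ) (D : ℕ)
    (Qx : (Fin dd → ℝ) → MvPolynomial (Fin dd) ℝ) (𝔓 : Set (Tile dd))
    (E₁ : Set (Fin dd → ℝ)) (n : ℕ) : Set (Tile dd) :=
  {p ∈ denseTiles α D Qx 𝔓 E₁ n |
    ∀ q ∈ denseTiles α D Qx 𝔓 E₁ n, Tile.le α D p q → p = q}

/-- `[0,1)^dd`, the region containing the `D`-adic grid. -/
def unitCube (dd : ℕ) : Set (Fin dd → ℝ) := {x | ∀ i, 0 ≤ x i ∧ x i < 1}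

namespace S9

variable {dd : ℕ} {α : Fin dd → ℕ} {D : ℕ}

/-- side length of `J` in coordinate `i` -/
def side (α : Fin dd → ℕ) (D : ℕ) (J : DCube dd) (i : Fin dd) : ℝ :=
  (D : ℝ) ^ (J.s * (α i : ℤ))

lemma side_pos (hD : 2 ≤ D) (J : DCube dd) (i : Fin dd) : 0 < side α D J i := by
  have : (0:ℝ) < D := by positivity
  exact zpow_pos this _

lemma mem_toSet {J : DCube dd} {x : Fin dd → ℝ} :
    x ∈ J.toSet α D ↔ ∀ i, side α D J i * J.k i ≤ x i ∧ x i < side α D J i * (J.k i + 1) :=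
  Iff.rfl

lemma toSet_eq_pi (J : DCube dd) :
    J.toSet α D = Set.pi Set.univ
      (fun i => Set.Ico (side α D J i * J.k i) (side α D J i * (J.k i + 1))) := by
  ext x
  simp [DCube.toSet, Set.mem_pi, side, Set.mem_Ico]

lemma measurableSet_toSet (J : DCube dd) : MeasurableSet (J.toSet α D) := by
  rw [toSet_eq_pi]
  exact MeasurableSet.pi Set.countable_univ fun i _ => measurableSet_Ico

lemma volume_toSet (J : DCube dd) :
    volume (J.toSet α D) = ∏ i, ENNReal.ofReal (side α D J i) := by
  rw [toSet_eq_pi, volume_pi_pi]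
  congr 1
  ext i
  rw [Real.volume_Ico]
  ring_nf

lemma volume_toSet_pos (hD : 2 ≤ D) (J : DCube dd) : 0 < volume (J.toSet α D) := by
  rw [volume_toSet, pos_iff_ne_zero, Finset.prod_ne_zero_iff]
  intro i _
  simp [ENNReal.ofReal_pos, side_pos hD, ne_of_gt, (ENNReal.ofReal_pos.mpr (side_pos hD J i)).ne' ]

lemma volume_toSet_ne_top (J : DCube dd) : volume (J.toSet α D) ≠ ⊤ := by
  rw [volume_toSet]
  exact (ENNReal.prod_lt_top fun i _ => ENNReal.ofReal_lt_top).ne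

/-- the corner point of a cube -/
def corner (α : Fin dd → ℕ) (D : ℕ) (J : DCube dd) : Fin dd → ℝ :=
  fun i => side α D J i * J.k i

lemma corner_mem (hD : 2 ≤ D) (J : DCube dd) : corner α D J ∈ J.toSet α D := by
  intro i
  constructor
  · exact le_refl _
  · have := side_pos (α := α) hD J i
    have : side α D J i * J.k i < side α D J i * (J.k i + 1) := by
      have h1 : (J.k i : ℝ) < J.k i + 1 := by linarith
      exact mul_lt_mul_of_pos_left h1 this
    exact this

lemma toSet_nonempty (hD : 2 ≤ D) (J : DCube dd) : (J.toSet α D).Nonempty :=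
  ⟨corner α D J, corner_mem hD J⟩

end S9
namespace S9

variable {dd : ℕ} {α : Fin dd → ℕ} {D : ℕ}

lemma side_ratio (hD : 2 ≤ D) (J J' : DCube dd) (i : Fin dd) (hs : J.s ≤ J'.s) :
    ∃ t : ℕ, 1 ≤ t ∧ side α D J' i = side α D J i * t := by
  refine ⟨D ^ ((J'.s - J.s) * (α i : ℤ)).toNat, Nat.one_le_iff_ne_zero.mpr (by positivity), ?_⟩
  have hD0 : (D:ℝ) ≠ 0 := by positivity
  have hnn : 0 ≤ (J'.s - J.s) * (α i : ℤ) :=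
    mul_nonneg (by linarith) (by positivity)
  have : ((D ^ ((J'.s - J.s) * (α i : ℤ)).toNat : ℕ) : ℝ)
      = (D:ℝ) ^ ((J'.s - J.s) * (α i : ℤ)) := by
    rw [Nat.cast_pow, ← zpow_natCast, Int.toNat_of_nonneg hnn]
  rw [this, side, side, ← zpow_add₀ hD0]
  congr 1
  ring

/-- Dyadic dichotomy: if two cubes meet and `J` has the smaller scale, `J ⊆ J'`. -/
lemma toSet_subset_of_mem (hD : 2 ≤ D) {J J' : DCube dd} (hs : J.s ≤ J'.s)
    {x : Fin dd → ℝ} (hx : x ∈ J.toSet α D) (hx' : x ∈ J'.toSet α D) :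
    J.toSet α D ⊆ J'.toSet α D := by
  intro y hy i
  obtain ⟨t, ht1, ht⟩ := side_ratio (α := α) hD J J' i hs
  set h : ℝ := side α D J i with hh
  have hpos : 0 < h := side_pos hD J i
  obtain ⟨a1, a2⟩ := hx i
  obtain ⟨b1, b2⟩ := hx' i
  obtain ⟨c1, c2⟩ := hy i
  rw [mem_toSet] at *
  -- integer inequalities
  have key1 : (t : ℤ) * J'.k i ≤ J.k i := by
    have hr : h * ((t:ℝ) * J'.k i) < h * ((J.k i : ℝ) + 1) := by
      calc h * ((t:ℝ) * J'.k i) = side α D J' i * J'.k i := by rw [ht]; ring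
        _ ≤ x i := b1
        _ < h * (J.k i + 1) := a2
    have := (mul_lt_mul_iff_right₀ hpos).mp hr
    have : ((t : ℤ) * J'.k i : ℝ) < ((J.k i : ℤ) : ℝ) + 1 := by push_cast; push_cast at this; linarith
    have := Int.lt_add_one_iff.mp (by exact_mod_cast (by push_cast at this ⊢; linarith : ((t : ℤ) * J'.k i : ℝ) < ((J.k i + 1 : ℤ) : ℝ)))
    exact this
  have key2 : J.k i + 1 ≤ (t : ℤ) * (J'.k i + 1) := by
    have hr : h * ((J.k i : ℝ)) < h * ((t:ℝ) * (J'.k i + 1)) := by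
      calc h * (J.k i : ℝ) ≤ x i := a1
        _ < side α D J' i * (J'.k i + 1) := b2
        _ = h * ((t:ℝ) * (J'.k i + 1)) := by rw [ht]; ring
    have := (mul_lt_mul_iff_right₀ hpos).mp hr
    have h2 : ((J.k i : ℤ) : ℝ) < (((t : ℤ) * (J'.k i + 1) : ℤ) : ℝ) := by push_cast; push_cast at this; linarith
    exact Int.lt_iff_add_one_le.mp (by exact_mod_cast h2)
  constructor
  · calc side α D J' i * J'.k i = h * ((t:ℝ) * J'.k i) := by rw [ht]; ring
      _ ≤ h * (J.k i : ℝ) := by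
          refine mul_le_mul_of_nonneg_left ?_ hpos.le
          exact_mod_cast (by exact_mod_cast key1 : ((t : ℤ) * J'.k i : ℝ) ≤ ((J.k i : ℤ) : ℝ))
      _ ≤ y i := c1
  · calc y i < h * (J.k i + 1) := c2
      _ ≤ h * ((t:ℝ) * (J'.k i + 1)) := by
          refine mul_le_mul_of_nonneg_left ?_ hpos.le
          exact_mod_cast (by exact_mod_cast key2 : ((J.k i + 1 : ℤ) : ℝ) ≤ (((t : ℤ) * (J'.k i + 1) : ℤ) : ℝ))
      _ = side α D J' i * (J'.k i + 1) := by rw [ht]; ring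

lemma nested_or_disjoint (hD : 2 ≤ D) (J J' : DCube dd) {x : Fin dd → ℝ}
    (hx : x ∈ J.toSet α D) (hx' : x ∈ J'.toSet α D) :
    J.toSet α D ⊆ J'.toSet α D ∨ J'.toSet α D ⊆ J.toSet α D := by
  rcases le_total J.s J'.s with h | h
  · exact Or.inl (toSet_subset_of_mem hD h hx hx')
  · exact Or.inr (toSet_subset_of_mem hD h hx' hx)

end S9
namespace S9

variable {dd : ℕ} {α : Fin dd → ℕ} {D : ℕ}

lemma endpoints_of_subset (hD : 2 ≤ D) {J J' : DCube dd}
    (hsub : J.toSet α D ⊆ J'.toSet α D) (i : Fin dd) :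
    side α D J' i * J'.k i ≤ side α D J i * J.k i ∧
    side α D J i * (J.k i + 1) ≤ side α D J' i * (J'.k i + 1) := by
  have hc := hsub (corner_mem hD J)
  constructor
  · exact (hc i).1
  · by_contra hcon
    push_neg at hcon
    -- consider the point which is the corner except at coordinate i
    set y : Fin dd → ℝ := Function.update (corner α D J)
      i (max (side α D J i * J.k i) (side α D J' i * (J'.k i + 1))) with hy
    have hyJ : y ∈ J.toSet α D := by
      intro j
      by_cases hj : j = i
      · subst hj
        rw [hy]
        simp only [Function.update_self]
        refine ⟨le_max_left _ _, ?_⟩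
        have h1 : side α D J j * J.k j < side α D J j * (J.k j + 1) := by
          have := side_pos (α := α) hD J j
          nlinarith
        exact max_lt h1 hcon
      · rw [hy]
        simp only [Function.update_of_ne hj]
        exact (corner_mem hD J) j
    have := (hsub hyJ) i
    rw [hy] at this
    simp only [Function.update_self] at this
    exact absurd this.2 (not_lt.mpr (le_max_right _ _))

lemma side_le_of_subset (hD : 2 ≤ D) {J J' : DCube dd}
    (hsub : J.toSet α D ⊆ J'.toSet α D) (i : Fin dd) :
    side α D J i ≤ side α D J' i := by
  obtain ⟨h1, h2⟩ := endpoints_of_subset hD hsub i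
  have e1 : side α D J i * (J.k i + 1) = side α D J i * J.k i + side α D J i := by ring
  have e2 : side α D J' i * (J'.k i + 1) = side α D J' i * J'.k i + side α D J' i := by ring
  linarith

lemma scale_le_of_subset (hD : 2 ≤ D) (hα : ∀ i, 0 < α i) (i : Fin dd) {J J' : DCube dd}
    (hsub : J.toSet α D ⊆ J'.toSet α D) : J.s ≤ J'.s := by
  have hside := side_le_of_subset hD hsub i
  have hD1 : (1:ℝ) < D := by exact_mod_cast hD
  rw [side, side] at hside
  have := (zpow_le_zpow_iff_right₀ hD1).mp hside
  have hα' : (0:ℤ) < (α i : ℤ) := by exact_mod_cast hα i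
  exact le_of_mul_le_mul_right this hα'

lemma toSet_inj (hD : 2 ≤ D) (hα : ∀ i, 0 < α i) (i0 : Fin dd) {J J' : DCube dd}
    (h : J.toSet α D = J'.toSet α D) : J = J' := by
  have hs : J.s = J'.s :=
    le_antisymm (scale_le_of_subset hD hα i0 h.le) (scale_le_of_subset hD hα i0 h.ge)
  have hk : J.k = J'.k := by
    funext i
    have h1 := (endpoints_of_subset hD h.le i).1
    have h2 := (endpoints_of_subset hD h.ge i).1
    have hss : side α D J i = side α D J' i := by rw [side, side, hs]
    rw [hss] at h1 h2
    have hpos := side_pos (α := α) hD J' i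
    have heq : side α D J' i * (J'.k i : ℝ) = side α D J' i * (J.k i : ℝ) := le_antisymm h1 h2
    have : (J'.k i : ℝ) = (J.k i : ℝ) := mul_left_cancel₀ (ne_of_gt hpos) heq
    exact_mod_cast this.symm
  cases J; cases J'
  simp_all

lemma unitCube_eq_pi : unitCube dd = Set.pi Set.univ (fun _ => Set.Ico (0:ℝ) 1) := by
  ext x; simp [unitCube, Set.mem_pi]

lemma volume_unitCube : volume (unitCube dd) = 1 := by
  rw [unitCube_eq_pi, volume_pi_pi]
  simp

lemma measurableSet_unitCube : MeasurableSet (unitCube dd) := by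
  rw [unitCube_eq_pi]
  exact MeasurableSet.pi Set.countable_univ fun i _ => measurableSet_Ico

/-- valid cubes are inside the unit cube -/
lemma toSet_subset_unitCube (hD : 2 ≤ D) {J : DCube dd} (hJ : J.valid α D) :
    J.toSet α D ⊆ unitCube dd := by
  intro x hx i
  rw [mem_toSet] at hx
  obtain ⟨h1, h2⟩ := hx i
  have hpos := side_pos (α := α) hD J i
  have hk0 : (0:ℝ) ≤ J.k i := by exact_mod_cast (hJ.2 i).1
  constructor
  · have : 0 ≤ side α D J i * J.k i := mul_nonneg hpos.le hk0
    linarith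
  · -- x i < side * (k+1) ≤ 1
    have hlt : side α D J i * J.k i < 1 := (hJ.2 i).2
    -- side = D^(s*α i) with s ≤ 0 so side⁻¹ = D^(-s*α i) is a positive integer M
    obtain ⟨t, ht1, ht⟩ := side_ratio (α := α) hD J ⟨0, fun _ => 0⟩ i hJ.1
    -- side of scale-0 cube is 1
    have h0 : side α D (⟨0, fun _ => 0⟩ : DCube dd) i = 1 := by
      rw [side]; norm_num
    rw [h0] at ht
    -- 1 = side * t, side * k < 1 = side * t so k < t, k+1 ≤ t, side*(k+1) ≤ side*t = 1
    have hkt : J.k i < (t:ℤ) := by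
      have : side α D J i * (J.k i : ℝ) < side α D J i * (t:ℝ) := by rw [← ht]; exact hlt
      have := (mul_lt_mul_iff_right₀ hpos).mp this
      exact_mod_cast this
    have : (J.k i : ℝ) + 1 ≤ (t:ℝ) := by
      have : J.k i + 1 ≤ (t:ℤ) := hkt
      exact_mod_cast this
    calc x i < side α D J i * (J.k i + 1) := h2
      _ ≤ side α D J i * t := mul_le_mul_of_nonneg_left this hpos.le
      _ = 1 := ht.symm

end S9
namespace S9

variable {dd : ℕ} {α : Fin dd → ℕ} {D : ℕ}

lemma side_inv (hD : 2 ≤ D) (J : DCube dd) (hs : J.s ≤ 0) (i : Fin dd) :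
    side α D J i * ((D ^ ((-J.s * (α i : ℤ))).toNat : ℕ) : ℝ) = 1 := by
  have hD0 : (D:ℝ) ≠ 0 := by positivity
  have hnn : 0 ≤ -J.s * (α i : ℤ) := mul_nonneg (by linarith) (by positivity)
  have : ((D ^ ((-J.s * (α i : ℤ))).toNat : ℕ) : ℝ) = (D:ℝ) ^ (-J.s * (α i : ℤ)) := by
    rw [Nat.cast_pow, ← zpow_natCast, Int.toNat_of_nonneg hnn]
  rw [this, side, ← zpow_add₀ hD0]
  norm_num

lemma k_lt_of_valid (hD : 2 ≤ D) {J : DCube dd} (hJ : J.valid α D) (i : Fin dd) :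
    J.k i < ((D ^ ((-J.s * (α i : ℤ))).toNat : ℕ) : ℤ) := by
  have hpos := side_pos (α := α) hD J i
  have hsi := side_inv (α := α) hD J hJ.1 i
  have hlt : side α D J i * (J.k i : ℝ) < side α D J i * ((D ^ ((-J.s * (α i : ℤ))).toNat : ℕ) : ℝ) := by
    rw [hsi]; exact (hJ.2 i).2
  have := (mul_lt_mul_iff_right₀ hpos).mp hlt
  exact_mod_cast this

/-- every point of the unit cube lies in a valid cube of any given scale `s ≤ 0` -/
lemma exists_cube (hD : 2 ≤ D) (s : ℤ) (hs : s ≤ 0) {x : Fin dd → ℝ} (hx : x ∈ unitCube dd) :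
    ∃ J : DCube dd, J.s = s ∧ J.valid α D ∧ x ∈ J.toSet α D := by
  set J : DCube dd := ⟨s, fun i => ⌊x i / (D:ℝ) ^ (s * (α i : ℤ))⌋⟩ with hJ
  have hside : ∀ i, side α D J i = (D:ℝ) ^ (s * (α i : ℤ)) := fun i => rfl
  have hpos : ∀ i, (0:ℝ) < (D:ℝ) ^ (s * (α i : ℤ)) := fun i => side_pos (α := α) hD J i
  have hmem : x ∈ J.toSet α D := by
    rw [mem_toSet]
    intro i
    rw [hside]
    constructor
    · calc (D:ℝ) ^ (s * (α i : ℤ)) * (J.k i) 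
          = (D:ℝ) ^ (s * (α i : ℤ)) * ⌊x i / (D:ℝ) ^ (s * (α i : ℤ))⌋ := rfl
        _ ≤ (D:ℝ) ^ (s * (α i : ℤ)) * (x i / (D:ℝ) ^ (s * (α i : ℤ))) := by
            exact mul_le_mul_of_nonneg_left (Int.floor_le _) (hpos i).le
        _ = x i := by field_simp
    · have h1 : x i / (D:ℝ) ^ (s * (α i : ℤ)) < ⌊x i / (D:ℝ) ^ (s * (α i : ℤ))⌋ + 1 :=
        Int.lt_floor_add_one _
      calc x i = (D:ℝ) ^ (s * (α i : ℤ)) * (x i / (D:ℝ) ^ (s * (α i : ℤ))) := by field_simp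
        _ < (D:ℝ) ^ (s * (α i : ℤ)) * ((J.k i : ℝ) + 1) := by
            exact mul_lt_mul_of_pos_left h1 (hpos i)
  refine ⟨J, rfl, ⟨hs, fun i => ⟨?_, ?_⟩⟩, hmem⟩
  · have := (hx i).1
    exact Int.floor_nonneg.mpr (div_nonneg this (hpos i).le)
  · have h1 : (D:ℝ) ^ (s * (α i : ℤ)) * (J.k i) ≤ x i := (hmem i).1
    exact lt_of_le_of_lt h1 (hx i).2

/-- finiteness of the set of valid cubes with scales in a range -/
lemma finite_cubes (hD : 2 ≤ D) (s_min : ℤ) :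
    {J : DCube dd | J.valid α D ∧ s_min ≤ J.s}.Finite := by
  set B : Fin dd → ℤ := fun i => ((D ^ ((-s_min * (α i : ℤ))).toNat : ℕ) : ℤ) with hB
  have hsub : {J : DCube dd | J.valid α D ∧ s_min ≤ J.s} ⊆
      (fun p : ℤ × (Fin dd → ℤ) => DCube.mk p.1 p.2) ''
        ((Set.Icc s_min 0) ×ˢ (Set.pi Set.univ fun i => Set.Icc 0 (B i))) := by
    rintro J ⟨hJ, hs⟩
    refine ⟨(J.s, J.k), ⟨⟨hs, hJ.1⟩, ?_⟩, rfl⟩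
    intro i _
    refine ⟨(hJ.2 i).1, ?_⟩
    have h1 := k_lt_of_valid hD hJ i
    have h2 : ((D ^ ((-J.s * (α i : ℤ))).toNat : ℕ) : ℤ) ≤ B i := by
      show ((D ^ ((-J.s * (α i : ℤ))).toNat : ℕ) : ℤ) ≤ ((D ^ ((-s_min * (α i : ℤ))).toNat : ℕ) : ℤ)
      have hle : ((-J.s * (α i : ℤ))).toNat ≤ ((-s_min * (α i : ℤ))).toNat := by
        apply Int.toNat_le_toNat
        exact mul_le_mul_of_nonneg_right (by linarith) (by positivity)
      exact_mod_cast Nat.pow_le_pow_right (by linarith) hle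
    linarith
  refine Set.Finite.subset (Set.Finite.image _ ?_) hsub
  exact Set.Finite.prod (Set.finite_Icc _ _) (Set.Finite.pi fun i => Set.finite_Icc _ _)

end S9
namespace S9

variable {dd d : ℕ} {α : Fin dd → ℕ} {D : ℕ} {s_min s_max : ℤ} {𝔓 : Set (Tile dd)}
  {Qx : (Fin dd → ℝ) → MvPolynomial (Fin dd) ℝ} {E₁ : Set (Fin dd → ℝ)} {n : ℕ}

lemma Ebar_subset (p : Tile dd) : Ebar α D Qx p ⊆ p.I.toSet α D := fun _ h => h.1

lemma denseTiles_subset : denseTiles α D Qx 𝔓 E₁ n ⊆ 𝔓 := fun _ h => h.1.1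

lemma maxTiles_subset_dense : MaxTiles α D Qx 𝔓 E₁ n ⊆ denseTiles α D Qx 𝔓 E₁ n :=
  fun _ h => h.1

lemma mem_denseTiles_empty (hD : 2 ≤ D) {p : Tile dd} :
    p ∈ denseTiles α D Qx 𝔓 (∅ : Set (Fin dd → ℝ)) n ↔
      p ∈ 𝔓 ∧ volume (p.I.toSet α D) ≤ 2 ^ n * volume (Ebar α D Qx p) := by
  constructor
  · rintro ⟨⟨h1, _⟩, h3⟩
    exact ⟨h1, h3⟩
  · rintro ⟨h1, h3⟩
    refine ⟨⟨h1, ?_⟩, h3⟩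
    intro hcon
    obtain ⟨y, hy⟩ := toSet_nonempty (α := α) hD p.I
    exact (hcon hy)

lemma central_mem (hP : GoodCollection α D d s_min s_max 𝔓) {p : Tile dd} (hp : p ∈ 𝔓) :
    p.c ∈ p.Q := (hP.1 p hp).2.2.2.1

lemma tile_valid (hP : GoodCollection α D d s_min s_max 𝔓) {p : Tile dd} (hp : p ∈ 𝔓) :
    p.I.valid α D := (hP.1 p hp).1

/-- Two distinct maximal tiles with intersecting cubes have disjoint uncertainty regions. -/
lemma Q_disjoint_of_max (hD : 2 ≤ D) (hP : GoodCollection α D d s_min s_max 𝔓)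
    {p q : Tile dd} (hp : p ∈ MaxTiles α D Qx 𝔓 E₁ n) (hq : q ∈ MaxTiles α D Qx 𝔓 E₁ n)
    (hne : p ≠ q) {x : Fin dd → ℝ} (hxp : x ∈ p.I.toSet α D) (hxq : x ∈ q.I.toSet α D) :
    p.Q ∩ q.Q = ∅ := by
  have hpP : p ∈ 𝔓 := denseTiles_subset hp.1
  have hqP : q ∈ 𝔓 := denseTiles_subset hq.1
  rcases nested_or_disjoint hD p.I q.I hxp hxq with hsub | hsub
  · rcases hP.2.2.2 p hpP q hqP hsub with h | h
    · exact h
    · exact absurd (hp.2 q hq.1 ⟨hsub, h⟩) hne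
  · rcases hP.2.2.2 q hqP p hpP hsub with h | h
    · rw [Set.inter_comm]; exact h
    · exact absurd (hq.2 p hp.1 ⟨hsub, h⟩) hne.symm

/-- Distinct maximal tiles have disjoint `Ebar` sets. -/
lemma Ebar_disjoint_of_max (hD : 2 ≤ D) (hP : GoodCollection α D d s_min s_max 𝔓)
    {p q : Tile dd} (hp : p ∈ MaxTiles α D Qx 𝔓 E₁ n) (hq : q ∈ MaxTiles α D Qx 𝔓 E₁ n)
    (hne : p ≠ q) : Ebar α D Qx p ∩ Ebar α D Qx q = ∅ := by
  by_contra hcon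
  obtain ⟨x, hx1, hx2⟩ := Set.nonempty_iff_ne_empty.mpr hcon
  have hQ := Q_disjoint_of_max hD hP hp hq hne hx1.1 hx2.1
  exact absurd hQ (Set.nonempty_iff_ne_empty.mp ⟨Qx x, hx1.2, hx2.2⟩)

/-- distinct tiles with the same cube have disjoint `Ebar` sets -/
lemma Ebar_disjoint_same_cube (hP : GoodCollection α D d s_min s_max 𝔓)
    {p q : Tile dd} (hp : p ∈ 𝔓) (hq : q ∈ 𝔓) (hIe : p.I = q.I) (hne : p ≠ q) :
    Ebar α D Qx p ∩ Ebar α D Qx q = ∅ := by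
  have hQ := hP.2.2.1 p hp q hq hIe hne
  by_contra hcon
  obtain ⟨x, hx1, hx2⟩ := Set.nonempty_iff_ne_empty.mpr hcon
  exact absurd hQ (Set.nonempty_iff_ne_empty.mp ⟨Qx x, hx1.2, hx2.2⟩)

/-- at most `2^n` dense tiles sit on a fixed cube -/
lemma card_fiber_le (hD : 2 ≤ D) (hP : GoodCollection α D d s_min s_max 𝔓)
    (hQmeas : ∀ p ∈ 𝔓, MeasurableSet (Ebar α D Qx p)) (J : DCube dd)
    (F : Finset (Tile dd))
    (hF : ∀ p ∈ F, p ∈ 𝔓 ∧ p.I = J ∧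
      volume (p.I.toSet α D) ≤ 2 ^ n * volume (Ebar α D Qx p)) :
    F.card ≤ 2 ^ n := by
  have hvol : (F.card : ℝ≥0∞) * volume (J.toSet α D) ≤ 2 ^ n * volume (J.toSet α D) := by
    have hdisj : (F : Set (Tile dd)).Pairwise (Function.onFun Disjoint fun p => Ebar α D Qx p) := by
      intro p hp q hq hne
      rw [Function.onFun, Set.disjoint_iff_inter_eq_empty]
      exact Ebar_disjoint_same_cube hP (hF p hp).1 (hF q hq).1
        (by rw [(hF p hp).2.1, (hF q hq).2.1]) hne
    have hmeas : ∀ p ∈ F, MeasurableSet (Ebar α D Qx p) := fun p hp => hQmeas p (hF p hp).1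
    calc (F.card : ℝ≥0∞) * volume (J.toSet α D)
        = ∑ p ∈ F, volume (J.toSet α D) := by rw [Finset.sum_const, nsmul_eq_mul]
      _ ≤ ∑ p ∈ F, 2 ^ n * volume (Ebar α D Qx p) := by
          refine Finset.sum_le_sum fun p hp => ?_
          rw [← (hF p hp).2.1]
          exact (hF p hp).2.2
      _ = 2 ^ n * ∑ p ∈ F, volume (Ebar α D Qx p) := by rw [Finset.mul_sum]
      _ = 2 ^ n * volume (⋃ p ∈ F, Ebar α D Qx p) := by
          rw [measure_biUnion_finset hdisj hmeas]
      _ ≤ 2 ^ n * volume (J.toSet α D) := by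
          refine mul_le_mul_right (measure_mono ?_) _
          refine Set.iUnion₂_subset fun p hp => ?_
          rw [← (hF p hp).2.1]
          exact Ebar_subset p
  have h0 : volume (J.toSet α D) ≠ 0 := (volume_toSet_pos hD J).ne'
  have htop : volume (J.toSet α D) ≠ ⊤ := volume_toSet_ne_top J
  have hle : (F.card : ℝ≥0∞) ≤ 2 ^ n := by
    rw [← ENNReal.mul_le_mul_iff_left h0 htop]
    exact hvol
  exact_mod_cast hle

end S9
namespace S9

variable {dd d : ℕ} {α : Fin dd → ℕ} {D : ℕ} {s_min s_max : ℤ} {𝔓 : Set (Tile dd)}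
  {Qx : (Fin dd → ℝ) → MvPolynomial (Fin dd) ℝ} {n : ℕ}

lemma finite_M0 (hD : 2 ≤ D) (hP : GoodCollection α D d s_min s_max 𝔓)
    (hQmeas : ∀ p ∈ 𝔓, MeasurableSet (Ebar α D Qx p)) :
    (MaxTiles α D Qx 𝔓 (∅ : Set (Fin dd → ℝ)) n).Finite := by
  classical
  have hcov : MaxTiles α D Qx 𝔓 (∅ : Set (Fin dd → ℝ)) n ⊆
      ⋃ J ∈ {J : DCube dd | J.valid α D ∧ s_min ≤ J.s},
        {p ∈ MaxTiles α D Qx 𝔓 (∅ : Set (Fin dd → ℝ)) n | p.I = J} := by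
    intro p hp
    have hpP : p ∈ 𝔓 := denseTiles_subset hp.1
    exact Set.mem_biUnion ⟨tile_valid hP hpP, (hP.1 p hpP).2.1⟩ ⟨hp, rfl⟩
  refine Set.Finite.subset (Set.Finite.biUnion (finite_cubes hD s_min) fun J _ => ?_) hcov
  by_contra hinf
  obtain ⟨F, hF, hcard⟩ := (Set.Infinite.exists_subset_card_eq hinf) (2 ^ n + 1)
  have : F.card ≤ 2 ^ n := by
    refine card_fiber_le hD hP hQmeas J F fun p hp => ?_
    obtain ⟨hpM, hpI⟩ := hF hp
    have hdense := (mem_denseTiles_empty (n := n) hD).mp hpM.1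
    exact ⟨hdense.1, hpI, hdense.2⟩
  omega

open Classical in
/-- local counting function of the tiles of `𝔉` whose cube is inside `S` -/
noncomputable def gcnt (α : Fin dd → ℕ) (D : ℕ) (𝔉 : Finset (Tile dd))
    (S : Set (Fin dd → ℝ)) (y : Fin dd → ℝ) : ℕ :=
  (𝔉.filter fun p => y ∈ p.I.toSet α D ∧ p.I.toSet α D ⊆ S).card

lemma gcnt_mono_S {𝔉 : Finset (Tile dd)} {S S' : Set (Fin dd → ℝ)} (h : S ⊆ S')
    (y : Fin dd → ℝ) : gcnt α D 𝔉 S y ≤ gcnt α D 𝔉 S' y := by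
  classical
  refine Finset.card_le_card ?_
  intro p hp
  rw [Finset.mem_filter] at *
  exact ⟨hp.1, hp.2.1, hp.2.2.trans h⟩

/-- Chebyshev + Carleson packing estimate. -/
lemma cheby (hD : 2 ≤ D) (hP : GoodCollection α D d s_min s_max 𝔓)
    (hQmeas : ∀ p ∈ 𝔓, MeasurableSet (Ebar α D Qx p)) (𝔉 : Finset (Tile dd))
    (h𝔉 : ∀ p ∈ 𝔉, p ∈ MaxTiles α D Qx 𝔓 (∅ : Set (Fin dd → ℝ)) n)
    (S : Set (Fin dd → ℝ)) :
    (2 ^ (n+1) : ℝ≥0∞) * volume {y | 2 ^ (n+1) ≤ gcnt α D 𝔉 S y} ≤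
      2 ^ n * volume (S ∩ unitCube dd) := by
  classical
  set T : Finset (Tile dd) := 𝔉.filter (fun p => p.I.toSet α D ⊆ S) with hT
  set f : (Fin dd → ℝ) → ℝ≥0∞ :=
    fun y => ∑ p ∈ T, (p.I.toSet α D).indicator (fun _ => (1:ℝ≥0∞)) y with hf
  have hfval : ∀ y, f y = (gcnt α D 𝔉 S y : ℝ≥0∞) := by
    intro y
    rw [hf]
    have : gcnt α D 𝔉 S y = (T.filter fun p => y ∈ p.I.toSet α D).card := by
      rw [hT, Finset.filter_filter, gcnt]
      congr 1
      apply Finset.filter_congr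
      intro p _
      constructor
      · rintro ⟨h1, h2⟩; exact ⟨h2, h1⟩
      · rintro ⟨h1, h2⟩; exact ⟨h2, h1⟩
    rw [this, Finset.card_filter]
    push_cast
    refine Finset.sum_congr rfl fun p _ => ?_
    simp [Set.indicator_apply]
  have hmeas : ∀ p ∈ T, Measurable ((p.I.toSet α D).indicator (fun _ => (1:ℝ≥0∞))) :=
    fun p _ => measurable_const.indicator (measurableSet_toSet p.I)
  have hintegral : ∫⁻ y, f y = ∑ p ∈ T, volume (p.I.toSet α D) := by
    rw [hf]
    rw [MeasureTheory.lintegral_finset_sum _ hmeas]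
    refine Finset.sum_congr rfl fun p _ => ?_
    rw [MeasureTheory.lintegral_indicator (measurableSet_toSet p.I)]
    simp
  have hmarkov : (2 ^ (n+1) : ℝ≥0∞) * volume {y | (2 ^ (n+1) : ℝ≥0∞) ≤ f y} ≤ ∫⁻ y, f y :=
    MeasureTheory.mul_meas_ge_le_lintegral₀
      (Finset.measurable_sum _ hmeas).aemeasurable _
  have hset : {y | 2 ^ (n+1) ≤ gcnt α D 𝔉 S y} = {y | (2 ^ (n+1) : ℝ≥0∞) ≤ f y} := by
    ext y
    rw [Set.mem_setOf_eq, Set.mem_setOf_eq, hfval]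
    exact ⟨fun h => by exact_mod_cast h, fun h => by exact_mod_cast h⟩
  have hcarleson : ∑ p ∈ T, volume (p.I.toSet α D) ≤ 2 ^ n * volume (S ∩ unitCube dd) := by
    have hdisj : (T : Set (Tile dd)).Pairwise (Function.onFun Disjoint fun p => Ebar α D Qx p) := by
      intro p hp q hq hne
      rw [Function.onFun, Set.disjoint_iff_inter_eq_empty]
      exact Ebar_disjoint_of_max hD hP (h𝔉 p (Finset.mem_filter.mp hp).1)
        (h𝔉 q (Finset.mem_filter.mp hq).1) hne
    have hmeasE : ∀ p ∈ T, MeasurableSet (Ebar α D Qx p) := fun p hp =>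
      hQmeas p (denseTiles_subset (h𝔉 p (Finset.mem_filter.mp hp).1).1)
    calc ∑ p ∈ T, volume (p.I.toSet α D)
        ≤ ∑ p ∈ T, 2 ^ n * volume (Ebar α D Qx p) := by
          refine Finset.sum_le_sum fun p hp => ?_
          have := (mem_denseTiles_empty (n := n) hD).mp
            (h𝔉 p (Finset.mem_filter.mp hp).1).1
          exact this.2
      _ = 2 ^ n * ∑ p ∈ T, volume (Ebar α D Qx p) := by rw [Finset.mul_sum]
      _ = 2 ^ n * volume (⋃ p ∈ T, Ebar α D Qx p) := by
          rw [measure_biUnion_finset hdisj hmeasE]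
      _ ≤ 2 ^ n * volume (S ∩ unitCube dd) := by
          refine mul_le_mul_right (measure_mono ?_) _
          refine Set.iUnion₂_subset fun p hp => ?_
          have hpP : p ∈ 𝔓 := denseTiles_subset (h𝔉 p (Finset.mem_filter.mp hp).1).1
          have hsubS : p.I.toSet α D ⊆ S := (Finset.mem_filter.mp hp).2
          intro z hz
          exact ⟨hsubS (Ebar_subset p hz),
            toSet_subset_unitCube hD (tile_valid hP hpP) (Ebar_subset p hz)⟩
  calc (2 ^ (n+1) : ℝ≥0∞) * volume {y | 2 ^ (n+1) ≤ gcnt α D 𝔉 S y}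
      = (2 ^ (n+1) : ℝ≥0∞) * volume {y | (2 ^ (n+1) : ℝ≥0∞) ≤ f y} := by rw [hset]
    _ ≤ ∫⁻ y, f y := hmarkov
    _ = ∑ p ∈ T, volume (p.I.toSet α D) := hintegral
    _ ≤ 2 ^ n * volume (S ∩ unitCube dd) := hcarleson

end S9
namespace S9

variable {dd d : ℕ} {α : Fin dd → ℕ} {D : ℕ} {s_min s_max : ℤ} {𝔓 : Set (Tile dd)}
  {Qx : (Fin dd → ℝ) → MvPolynomial (Fin dd) ℝ} {n : ℕ}

lemma toSet_eq_of_subset_scale (hD : 2 ≤ D) {J J' : DCube dd}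
    (hsub : J.toSet α D ⊆ J'.toSet α D) (hs : J.s = J'.s) :
    J.toSet α D = J'.toSet α D := by
  have hside : ∀ i, side α D J i = side α D J' i := fun i => by rw [side, side, hs]
  have hends : ∀ i, side α D J i * J.k i = side α D J' i * J'.k i ∧
      side α D J i * (J.k i + 1) = side α D J' i * (J'.k i + 1) := by
    intro i
    obtain ⟨h1, h2⟩ := endpoints_of_subset hD hsub i
    have e := hside i
    constructor <;> nlinarith [h1, h2, e]
  ext y
  rw [mem_toSet, mem_toSet]
  constructor
  · intro h i
    obtain ⟨e1, e2⟩ := hends i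
    exact ⟨e1 ▸ (h i).1, e2 ▸ (h i).2⟩
  · intro h i
    obtain ⟨e1, e2⟩ := hends i
    exact ⟨e1.symm ▸ (h i).1, e2.symm ▸ (h i).2⟩

lemma exists_max_cube (hD : 2 ≤ D) (hα : ∀ i, 0 < α i) (i0 : Fin dd)
    (𝒥 : Finset (DCube dd)) {J₀ : DCube dd} (hJ₀ : J₀ ∈ 𝒥) :
    ∃ J ∈ 𝒥, J₀.toSet α D ⊆ J.toSet α D ∧
      ∀ J' ∈ 𝒥, J.toSet α D ⊆ J'.toSet α D → J = J' := by
  classical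
  set 𝒜 := 𝒥.filter (fun J => J₀.toSet α D ⊆ J.toSet α D) with h𝒜
  have hne : 𝒜.Nonempty := ⟨J₀, by simp [h𝒜, hJ₀]⟩
  obtain ⟨J, hJ, hmax⟩ := 𝒜.exists_max_image (fun J => J.s) hne
  rw [h𝒜, Finset.mem_filter] at hJ
  refine ⟨J, hJ.1, hJ.2, fun J' hJ' hsub => ?_⟩
  have hJ'A : J' ∈ 𝒜 := by
    rw [h𝒜, Finset.mem_filter]
    exact ⟨hJ', hJ.2.trans hsub⟩
  have h1 : J'.s ≤ J.s := hmax J' hJ'A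
  have h2 : J.s ≤ J'.s := scale_le_of_subset hD hα i0 hsub
  exact toSet_inj hD hα i0 (toSet_eq_of_subset_scale hD hsub (le_antisymm h2 h1))

/-- The John–Nirenberg type iteration. -/
lemma jn (hD : 2 ≤ D) (hα : ∀ i, 0 < α i) (i0 : Fin dd)
    (hP : GoodCollection α D d s_min s_max 𝔓)
    (hQmeas : ∀ p ∈ 𝔓, MeasurableSet (Ebar α D Qx p)) (𝔉 : Finset (Tile dd))
    (h𝔉 : ∀ p ∈ 𝔉, p ∈ MaxTiles α D Qx 𝔓 (∅ : Set (Fin dd → ℝ)) n) (k : ℕ) :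
    ∀ S : Set (Fin dd → ℝ),
      volume {y | k * 2 ^ (n+1) < gcnt α D 𝔉 S y} ≤
        2⁻¹ ^ k * volume (S ∩ unitCube dd) := by
  classical
  induction k with
  | zero =>
    intro S
    simp only [Nat.zero_mul, pow_zero, one_mul]
    refine measure_mono ?_
    intro y hy
    rw [Set.mem_setOf_eq] at hy
    have : (𝔉.filter fun p => y ∈ p.I.toSet α D ∧ p.I.toSet α D ⊆ S).Nonempty := by
      rw [← Finset.card_pos]; exact hy
    obtain ⟨p, hp⟩ := this
    rw [Finset.mem_filter] at hp
    have hpP : p ∈ 𝔓 := denseTiles_subset (h𝔉 p hp.1).1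
    exact ⟨hp.2.2 hp.2.1, toSet_subset_unitCube hD (tile_valid hP hpP) hp.2.1⟩
  | succ k ih =>
    intro S
    set m : ℕ := 2 ^ (n+1) with hm
    set V : Set (Fin dd → ℝ) := {y | k * m < gcnt α D 𝔉 S y} with hV
    set 𝒢 : Finset (Tile dd) := 𝔉.filter (fun q => q.I.toSet α D ⊆ V) with h𝒢
    set 𝒥 : Finset (DCube dd) := 𝒢.image (fun q => q.I) with h𝒥
    set MaxJ : Finset (DCube dd) :=
      𝒥.filter (fun J => ∀ J' ∈ 𝒥, J.toSet α D ⊆ J'.toSet α D → J = J') with hMaxJ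
    -- covering claim
    have hcover : {y | (k+1) * m < gcnt α D 𝔉 S y} ⊆
        ⋃ J ∈ MaxJ, {y | m ≤ gcnt α D 𝔉 (J.toSet α D) y} := by
      intro x hx
      rw [Set.mem_setOf_eq] at hx
      set Px : Finset (Tile dd) :=
        𝔉.filter (fun p => x ∈ p.I.toSet α D ∧ p.I.toSet α D ⊆ S) with hPx
      have hgcnt : gcnt α D 𝔉 S x = Px.card := rfl
      rw [hgcnt] at hx
      have hPxcard : (k+1) * m < Px.card := hx
      have hPxne : Px.Nonempty := by
        rw [← Finset.card_pos]; omega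
      set Sc : Finset ℤ := Px.image (fun p => p.I.s) with hSc
      have hScne : Sc.Nonempty := hPxne.image _
      set A : ℤ → Finset (Tile dd) := fun σ => Px.filter (fun p => σ ≤ p.I.s) with hA
      -- the subset relation from scales, for tiles through x
      have hF1 : ∀ p ∈ Px, ∀ q ∈ Px, p.I.s ≤ q.I.s → p.I.toSet α D ⊆ q.I.toSet α D := by
        intro p hp q hq hs
        rw [hPx, Finset.mem_filter] at hp hq
        exact toSet_subset_of_mem hD hs hp.2.1 hq.2.1
      set Tc : Finset ℤ := Sc.filter (fun σ => k * m < (A σ).card) with hTc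
      have hTcne : Tc.Nonempty := by
        refine ⟨Sc.min' hScne, ?_⟩
        rw [hTc, Finset.mem_filter]
        refine ⟨Sc.min'_mem hScne, ?_⟩
        have : A (Sc.min' hScne) = Px := by
          rw [hA]
          refine Finset.filter_true_of_mem fun p hp => ?_
          exact Sc.min'_le _ (Finset.mem_image_of_mem _ hp)
        rw [this]
        exact lt_of_le_of_lt (Nat.mul_le_mul_right m (Nat.le_succ k)) hPxcard
      set σs : ℤ := Tc.max' hTcne with hσs
      have hσsTc : σs ∈ Tc := Tc.max'_mem hTcne
      have hσsSc : σs ∈ Sc := Finset.mem_of_mem_filter _ hσsTc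
      have hAcard : k * m < (A σs).card := (Finset.mem_filter.mp hσsTc).2
      obtain ⟨qs, hqsPx, hqss⟩ := Finset.mem_image.mp hσsSc
      -- C := qs.I.toSet is inside V
      have hCV : qs.I.toSet α D ⊆ V := by
        intro y hy
        rw [hV, Set.mem_setOf_eq]
        have hsubA : A σs ⊆ 𝔉.filter (fun p => y ∈ p.I.toSet α D ∧ p.I.toSet α D ⊆ S) := by
          intro p hp
          rw [hA, Finset.mem_filter] at hp
          obtain ⟨hpPx, hps⟩ := hp
          have hsub : qs.I.toSet α D ⊆ p.I.toSet α D :=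
            hF1 qs hqsPx p hpPx (by rw [hqss]; exact hps)
          have := Finset.mem_filter.mp hpPx
          rw [Finset.mem_filter]
          exact ⟨this.1, hsub hy, this.2.2⟩
        calc k * m < (A σs).card := hAcard
          _ ≤ _ := Finset.card_le_card hsubA
      have hqs𝒢 : qs ∈ 𝒢 := by
        rw [h𝒢, Finset.mem_filter]
        exact ⟨Finset.mem_of_mem_filter _ hqsPx, hCV⟩
      -- x has many tiles inside C
      have hgC : m ≤ gcnt α D 𝔉 (qs.I.toSet α D) x := by
        set B : Finset (Tile dd) := Px.filter (fun p => p.I.s ≤ σs) with hB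
        set Bc : Finset (Tile dd) := Px.filter (fun p => ¬ p.I.s ≤ σs) with hBc
        have hsplit : B.card + Bc.card = Px.card := by
          rw [hB, hBc]
          exact Finset.card_filter_add_card_filter_not _
        have hBccard : Bc.card ≤ k * m := by
          rcases Finset.eq_empty_or_nonempty Bc with he | hne
          · rw [he]; simp
          · set Scg : Finset ℤ := Sc.filter (fun σ => σs < σ) with hScg
            have hScgne : Scg.Nonempty := by
              obtain ⟨p1, hp1⟩ := hne
              rw [hBc, Finset.mem_filter] at hp1
              refine ⟨p1.I.s, ?_⟩
              rw [hScg, Finset.mem_filter]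
              exact ⟨Finset.mem_image_of_mem _ hp1.1, by omega⟩
            set σ' : ℤ := Scg.min' hScgne with hσ'
            have hσ'Scg : σ' ∈ Scg := Scg.min'_mem hScgne
            have hBcA : Bc ⊆ A σ' := by
              intro p hp
              rw [hBc, Finset.mem_filter] at hp
              rw [hA, Finset.mem_filter]
              refine ⟨hp.1, ?_⟩
              have hpScg : p.I.s ∈ Scg := by
                rw [hScg, Finset.mem_filter]
                exact ⟨Finset.mem_image_of_mem _ hp.1, by omega⟩
              exact Scg.min'_le _ hpScg
            have hA' : (A σ').card ≤ k * m := by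
              by_contra hcon
              push_neg at hcon
              have hσ'Tc : σ' ∈ Tc := by
                rw [hTc, Finset.mem_filter]
                exact ⟨Finset.mem_of_mem_filter _ hσ'Scg, hcon⟩
              have h1 : σ' ≤ σs := Tc.le_max' _ hσ'Tc
              have h2 : σs < σ' := (Finset.mem_filter.mp hσ'Scg).2
              omega
            exact (Finset.card_le_card hBcA).trans hA'
        have hBg : B ⊆ 𝔉.filter
            (fun p => x ∈ p.I.toSet α D ∧ p.I.toSet α D ⊆ qs.I.toSet α D) := by
          intro p hp
          rw [hB, Finset.mem_filter] at hp
          obtain ⟨hpPx, hps⟩ := hp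
          have hsub : p.I.toSet α D ⊆ qs.I.toSet α D :=
            hF1 p hpPx qs hqsPx (by omega)
          have := Finset.mem_filter.mp hpPx
          rw [Finset.mem_filter]
          exact ⟨this.1, this.2.1, hsub⟩
        have hmul : (k+1) * m = k * m + m := by ring
        have : m ≤ B.card := by
          rw [hmul] at hPxcard
          omega
        exact this.trans (Finset.card_le_card hBg)
      -- pass to a maximal cube
      obtain ⟨JM, hJM𝒥, hJMsub, hJMmax⟩ :=
        exists_max_cube hD hα i0 𝒥 (Finset.mem_image_of_mem (fun q => q.I) hqs𝒢)
      have hJMMaxJ : JM ∈ MaxJ := by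
        rw [hMaxJ, Finset.mem_filter]
        exact ⟨hJM𝒥, hJMmax⟩
      refine Set.mem_biUnion hJMMaxJ ?_
      rw [Set.mem_setOf_eq]
      exact hgC.trans (gcnt_mono_S hJMsub x)
    -- measure estimate
    have hdisjMaxJ : (MaxJ : Set (DCube dd)).Pairwise
        (Function.onFun Disjoint fun J => J.toSet α D) := by
      intro J1 hJ1 J2 hJ2 hne
      rw [Function.onFun, Set.disjoint_iff_inter_eq_empty]
      by_contra hcon
      obtain ⟨y, hy1, hy2⟩ := Set.nonempty_iff_ne_empty.mpr hcon
      rw [Finset.mem_coe, hMaxJ, Finset.mem_filter] at hJ1 hJ2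
      rcases nested_or_disjoint hD J1 J2 hy1 hy2 with hsub | hsub
      · exact hne (hJ1.2 J2 hJ2.1 hsub)
      · exact hne (hJ2.2 J1 hJ1.1 hsub).symm
    have hJV : ∀ J ∈ MaxJ, J.toSet α D ⊆ V := by
      intro J hJ
      rw [hMaxJ, Finset.mem_filter, h𝒥] at hJ
      obtain ⟨q, hq𝒢, hqI⟩ := Finset.mem_image.mp hJ.1
      rw [h𝒢, Finset.mem_filter] at hq𝒢
      rw [← hqI]
      exact hq𝒢.2
    calc volume {y | (k+1) * m < gcnt α D 𝔉 S y}
        ≤ volume (⋃ J ∈ MaxJ, {y | m ≤ gcnt α D 𝔉 (J.toSet α D) y}) :=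
          measure_mono hcover
      _ ≤ ∑ J ∈ MaxJ, volume {y | m ≤ gcnt α D 𝔉 (J.toSet α D) y} :=
          measure_biUnion_finset_le _ _
      _ ≤ ∑ J ∈ MaxJ, 2⁻¹ * volume (J.toSet α D) := by
          refine Finset.sum_le_sum fun J hJ => ?_
          have hch := cheby hD hP hQmeas 𝔉 h𝔉 (J.toSet α D)
          have h2 : (2:ℝ≥0∞) ^ n * volume (J.toSet α D ∩ unitCube dd) ≤
              2 ^ n * volume (J.toSet α D) :=
            mul_le_mul_right (measure_mono Set.inter_subset_left) _
          have hch2 : (2 ^ (n+1) : ℝ≥0∞) * volume {y | m ≤ gcnt α D 𝔉 (J.toSet α D) y} ≤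
              2 ^ (n+1) * (2⁻¹ * volume (J.toSet α D)) := by
            refine (hch.trans h2).trans_eq ?_
            rw [← mul_assoc]
            congr 1
            rw [pow_succ, mul_assoc, ENNReal.mul_inv_cancel two_ne_zero ENNReal.ofNat_ne_top,
              mul_one]
          exact (ENNReal.mul_le_mul_iff_right (by positivity) (by
            exact ENNReal.pow_ne_top ENNReal.ofNat_ne_top)).mp hch2
      _ = 2⁻¹ * ∑ J ∈ MaxJ, volume (J.toSet α D) := by rw [Finset.mul_sum]
      _ = 2⁻¹ * volume (⋃ J ∈ MaxJ, J.toSet α D) := by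
          rw [measure_biUnion_finset hdisjMaxJ (fun J _ => measurableSet_toSet J)]
      _ ≤ 2⁻¹ * volume V := by
          refine mul_le_mul_right (measure_mono ?_) _
          exact Set.iUnion₂_subset hJV
      _ ≤ 2⁻¹ * (2⁻¹ ^ k * volume (S ∩ unitCube dd)) := mul_le_mul_right (ih S) _
      _ = 2⁻¹ ^ (k+1) * volume (S ∩ unitCube dd) := by
          rw [← mul_assoc, ← pow_succ']

end S9
namespace S9

variable {dd d : ℕ} {α : Fin dd → ℕ} {D : ℕ} {s_min s_max : ℤ} {𝔓 : Set (Tile dd)}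
  {Qx : (Fin dd → ℝ) → MvPolynomial (Fin dd) ℝ} {n : ℕ}

lemma Tile.le_trans {p q r : Tile dd} (h1 : Tile.le α D p q) (h2 : Tile.le α D q r) :
    Tile.le α D p r := ⟨h1.1.trans h2.1, h2.2.trans h1.2⟩

/-- every dense tile sits below a maximal dense tile -/
lemma exists_max_above (hD : 2 ≤ D) (hα : ∀ i, 0 < α i) (i0 : Fin dd)
    (hP : GoodCollection α D d s_min s_max 𝔓) {p : Tile dd}
    (hp : p ∈ denseTiles α D Qx 𝔓 (∅ : Set (Fin dd → ℝ)) n) :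
    ∃ q ∈ MaxTiles α D Qx 𝔓 (∅ : Set (Fin dd → ℝ)) n, Tile.le α D p q := by
  set P : ℤ → Prop := fun s =>
    ∃ q ∈ denseTiles α D Qx 𝔓 (∅ : Set (Fin dd → ℝ)) n, Tile.le α D p q ∧ q.I.s = s with hPdef
  have Hbdd : ∃ b : ℤ, ∀ z : ℤ, P z → z ≤ b := by
    refine ⟨s_max, ?_⟩
    rintro z ⟨q, hq, _, rfl⟩
    exact (hP.1 q (denseTiles_subset hq)).2.2.1
  have Hinh : ∃ z : ℤ, P z := ⟨p.I.s, p, hp, ⟨le_refl _, le_refl _⟩, rfl⟩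
  obtain ⟨sb, ⟨q, hq, hpq, hqs⟩, hub⟩ := Int.exists_greatest_of_bdd Hbdd Hinh
  refine ⟨q, ⟨hq, ?_⟩, hpq⟩
  intro r hr hqr
  have hsr : r.I.s ≤ sb := hub r.I.s ⟨r, hr, Tile.le_trans hpq hqr, rfl⟩
  have hsq : q.I.s ≤ r.I.s := scale_le_of_subset hD hα i0 hqr.1
  have hIeq : q.I = r.I :=
    toSet_inj hD hα i0 (toSet_eq_of_subset_scale hD hqr.1 (by omega))
  by_contra hne
  have hQdisj := hP.2.2.1 q (denseTiles_subset hq) r (denseTiles_subset hr) hIeq hne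
  have : r.c ∈ q.Q ∩ r.Q := ⟨hqr.2 (central_mem hP (denseTiles_subset hr)),
    central_mem hP (denseTiles_subset hr)⟩
  rw [hQdisj] at this
  exact this

lemma sum_inv_sq_le_one : ∑' j : ℕ, ENNReal.ofReal (1 / ((j:ℝ) + 2) ^ 2) ≤ 1 := by
  refine ENNReal.tsum_le_of_sum_range_le fun N => ?_
  have h1 : ∀ j : ℕ, ENNReal.ofReal (1 / ((j:ℝ) + 2) ^ 2) ≤
      ENNReal.ofReal (1 / ((j:ℝ) + 1) - 1 / ((j:ℝ) + 2)) := by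
    intro j
    refine ENNReal.ofReal_le_ofReal ?_
    have hj1 : (0:ℝ) < (j:ℝ) + 1 := by positivity
    have hj2 : (0:ℝ) < (j:ℝ) + 2 := by positivity
    rw [div_sub_div _ _ (ne_of_gt hj1) (ne_of_gt hj2)]
    rw [div_le_div_iff₀ (by positivity) (by positivity)]
    ring_nf
    nlinarith
  calc ∑ j ∈ Finset.range N, ENNReal.ofReal (1 / ((j:ℝ) + 2) ^ 2)
      ≤ ∑ j ∈ Finset.range N, ENNReal.ofReal (1 / ((j:ℝ) + 1) - 1 / ((j:ℝ) + 2)) :=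
        Finset.sum_le_sum fun j _ => h1 j
    _ = ENNReal.ofReal (∑ j ∈ Finset.range N, (1 / ((j:ℝ) + 1) - 1 / ((j:ℝ) + 2))) := by
        rw [ENNReal.ofReal_sum_of_nonneg]
        intro j _
        have hj1 : (0:ℝ) < (j:ℝ) + 1 := by positivity
        have hj2 : (0:ℝ) < (j:ℝ) + 2 := by positivity
        refine sub_nonneg.mpr ?_
        exact one_div_le_one_div_of_le hj1 (by linarith)
    _ ≤ 1 := by
        have : ∑ j ∈ Finset.range N, (1 / ((j:ℝ) + 1) - 1 / ((j:ℝ) + 2)) =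
            1 - 1 / ((N:ℝ) + 1) := by
          induction N with
          | zero => simp
          | succ N ihN =>
            rw [Finset.sum_range_succ, ihN]
            push_cast
            ring
        rw [this]
        refine ENNReal.ofReal_le_of_le_toReal ?_
        simp only [ENNReal.toReal_one]
        have : (0:ℝ) < (N:ℝ) + 1 := by positivity
        have := one_div_pos.mpr this
        linarith

lemma log_lam_gt {lam : ℝ} (hlam : 10 * Real.exp 1 < lam) : 3 < Real.log lam := by
  have hepos : (0:ℝ) < Real.exp 1 := Real.exp_pos 1
  have hlampos : (0:ℝ) < lam := by nlinarith
  have h1 : Real.log (10 * Real.exp 1) < Real.log lam :=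
    Real.log_lt_log (by positivity) hlam
  have h2 : Real.log (10 * Real.exp 1) = Real.log 10 + 1 := by
    rw [Real.log_mul (by norm_num) (ne_of_gt hepos), Real.log_exp]
  have h3 : (2.07:ℝ) < Real.log 10 := by
    have h8 : Real.log 8 ≤ Real.log 10 := Real.log_le_log (by norm_num) (by norm_num)
    have : Real.log 8 = 3 * Real.log 2 := by
      rw [show (8:ℝ) = 2 ^ 3 by norm_num, Real.log_pow]
      push_cast; ring
    have := Real.log_two_gt_d9
    nlinarith
  linarith

end S9
namespace S9

lemma kf_pow_le {lam : ℝ} (hlam : 10 * Real.exp 1 < lam) (n : ℕ) :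
    ((2:ℝ≥0∞)⁻¹) ^ (⌈Real.logb 2 ((lam * ((n:ℝ)+1))^2)⌉₊) ≤
      ENNReal.ofReal (1/lam^2 * (1/((n:ℝ)+1)^2)) := by
  have hlam1 : (1:ℝ) < lam := by
    have := Real.exp_pos 1
    have h1 : (1:ℝ) ≤ Real.exp 1 := by
      have := Real.add_one_le_exp (1:ℝ); linarith
    nlinarith
  set t : ℝ := (lam * ((n:ℝ)+1))^2 with ht
  have htpos : 0 < t := by positivity
  have hn0 : (0:ℝ) ≤ (n:ℝ) := Nat.cast_nonneg n
  have hln : (1:ℝ) ≤ lam * ((n:ℝ)+1) := by nlinarith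
  have ht1 : 1 ≤ t := by
    rw [ht, sq]
    nlinarith
  set k : ℕ := ⌈Real.logb 2 t⌉₊ with hk
  have h2k : t ≤ (2:ℝ) ^ k := by
    have h1 : Real.logb 2 t ≤ (k : ℝ) := Nat.le_ceil _
    have h2 : (2:ℝ) ^ (Real.logb 2 t) ≤ (2:ℝ) ^ (k:ℝ) :=
      Real.rpow_le_rpow_of_exponent_le (by norm_num) h1
    rw [Real.rpow_logb (by norm_num) (by norm_num) htpos] at h2
    rwa [Real.rpow_natCast] at h2
  have hinv : ((2:ℝ)⁻¹) ^ k ≤ 1 / t := by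
    rw [inv_pow, inv_eq_one_div]
    exact one_div_le_one_div_of_le htpos h2k
  have e1 : ((2:ℝ≥0∞))⁻¹ = ENNReal.ofReal ((2:ℝ)⁻¹) := by
    rw [ENNReal.ofReal_inv_of_pos (by norm_num)]
    norm_num
  rw [e1, ← ENNReal.ofReal_pow (by norm_num)]
  refine ENNReal.ofReal_le_ofReal ?_
  calc ((2:ℝ)⁻¹) ^ k ≤ 1 / t := hinv
    _ = 1/lam^2 * (1/((n:ℝ)+1)^2) := by
      rw [ht]
      field_simp

lemma kf_le {lam : ℝ} (hlam : 10 * Real.exp 1 < lam) (n : ℕ) (hn : 1 ≤ n) :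
    2 * ((⌈Real.logb 2 ((lam * ((n:ℝ)+1))^2)⌉₊ : ℝ)) ≤
      1000 * Real.log ((n:ℝ)+1) * Real.log lam := by
  have ha : 3 < Real.log lam := log_lam_gt hlam
  have hl2 : (0.6931:ℝ) < Real.log 2 := by
    have := Real.log_two_gt_d9; linarith
  have hb : Real.log 2 ≤ Real.log ((n:ℝ)+1) := by
    refine Real.log_le_log (by norm_num) ?_
    have : (1:ℕ) ≤ n := hn
    have : (1:ℝ) ≤ (n:ℝ) := by exact_mod_cast this
    linarith
  set a : ℝ := Real.log lam with hadef
  set b : ℝ := Real.log ((n:ℝ)+1) with hbdef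
  have hb' : (0.6931:ℝ) < b := lt_of_lt_of_le hl2 hb
  have hlam1 : (1:ℝ) < lam := by
    have h1 : (1:ℝ) ≤ Real.exp 1 := by
      have := Real.add_one_le_exp (1:ℝ); linarith
    nlinarith
  have hn1 : (1:ℝ) ≤ (n:ℝ) + 1 := by
    have : (0:ℝ) ≤ (n:ℝ) := Nat.cast_nonneg n
    linarith
  have hlogt : Real.logb 2 ((lam * ((n:ℝ)+1))^2) = 2 * (a + b) / Real.log 2 := by
    rw [Real.logb, Real.log_pow, Real.log_mul (by linarith) (by linarith)]
    push_cast
    ring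
  have hlogt_nonneg : 0 ≤ Real.logb 2 ((lam * ((n:ℝ)+1))^2) := by
    rw [hlogt]
    have : 0 ≤ a + b := by linarith
    positivity
  have hceil : (⌈Real.logb 2 ((lam * ((n:ℝ)+1))^2)⌉₊ : ℝ) <
      Real.logb 2 ((lam * ((n:ℝ)+1))^2) + 1 := Nat.ceil_lt_add_one hlogt_nonneg
  have hdiv : 2 * (a + b) / Real.log 2 ≤ 3 * (a + b) := by
    rw [div_le_iff₀ (by linarith)]
    nlinarith
  have h5 : (⌈Real.logb 2 ((lam * ((n:ℝ)+1))^2)⌉₊ : ℝ) < 3 * (a + b) + 1 := by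
    calc (⌈Real.logb 2 ((lam * ((n:ℝ)+1))^2)⌉₊ : ℝ)
        < Real.logb 2 ((lam * ((n:ℝ)+1))^2) + 1 := hceil
      _ = 2 * (a + b) / Real.log 2 + 1 := by rw [hlogt]
      _ ≤ 3 * (a + b) + 1 := by linarith
  have hapos : (0:ℝ) < a := by linarith
  have hbpos : (0:ℝ) < b := by linarith
  have e1 : 6 * a ≤ 9 * (a * b) := by nlinarith
  have e2 : 6 * b ≤ 2 * (a * b) := by nlinarith
  have e3 : (2:ℝ) ≤ a * b := by nlinarith
  have e4 : (0:ℝ) ≤ a * b := by positivity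
  have : 1000 * b * a = 1000 * (a * b) := by ring
  rw [this]
  linarith

end S9
namespace S9

lemma toSet_dd0 {α : Fin 0 → ℕ} {D : ℕ} (J : DCube 0) : J.toSet α D = Set.univ :=
  Set.eq_univ_iff_forall.mpr (fun x i => i.elim0)

lemma card_le_pow_dd0 {d : ℕ} {α : Fin 0 → ℕ} {D : ℕ} {s_min s_max : ℤ} {𝔓 : Set (Tile 0)}
    {Qx : (Fin 0 → ℝ) → MvPolynomial (Fin 0) ℝ} {n : ℕ}
    (hD : 2 ≤ D) (hP : GoodCollection α D d s_min s_max 𝔓)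
    (hQmeas : ∀ p ∈ 𝔓, MeasurableSet (Ebar α D Qx p)) (F : Finset (Tile 0))
    (hF : ∀ p ∈ F, p ∈ MaxTiles α D Qx 𝔓 (∅ : Set (Fin 0 → ℝ)) n) :
    F.card ≤ 2 ^ n := by
  classical
  set J₀ : DCube 0 := ⟨0, fun i => i.elim0⟩ with hJ₀
  have huniv : volume (Set.univ : Set (Fin 0 → ℝ)) = 1 := by
    rw [← toSet_dd0 (α := α) (D := D) J₀, volume_toSet]
    simp
  have hdisj : (F : Set (Tile 0)).Pairwise (Function.onFun Disjoint fun p => Ebar α D Qx p) := by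
    intro p hp q hq hne
    rw [Function.onFun, Set.disjoint_iff_inter_eq_empty]
    exact Ebar_disjoint_of_max hD hP (hF p hp) (hF q hq) hne
  have hmeas : ∀ p ∈ F, MeasurableSet (Ebar α D Qx p) := fun p hp =>
    hQmeas p (denseTiles_subset (hF p hp).1)
  have hvol : (F.card : ℝ≥0∞) * 1 ≤ 2 ^ n * 1 := by
    calc (F.card : ℝ≥0∞) * 1 = ∑ p ∈ F, (1:ℝ≥0∞) := by rw [Finset.sum_const, nsmul_eq_mul]
      _ = ∑ p ∈ F, volume (p.I.toSet α D) := by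
          refine Finset.sum_congr rfl fun p _ => ?_
          rw [toSet_dd0, huniv]
      _ ≤ ∑ p ∈ F, 2 ^ n * volume (Ebar α D Qx p) := by
          refine Finset.sum_le_sum fun p hp => ?_
          exact ((mem_denseTiles_empty (n := n) hD).mp (hF p hp).1).2
      _ = 2 ^ n * volume (⋃ p ∈ F, Ebar α D Qx p) := by
          rw [← Finset.mul_sum, measure_biUnion_finset hdisj hmeas]
      _ ≤ 2 ^ n * 1 := by
          refine mul_le_mul_right ?_ _
          rw [← huniv]
          exact measure_mono (Set.subset_univ _)
  rw [mul_one, mul_one] at hvol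
  exact_mod_cast hvol

lemma one_le_target {lam : ℝ} (hlam : 10 * Real.exp 1 < lam) (n : ℕ) (hn : 1 ≤ n) :
    (1:ℝ) ≤ 1000 * Real.log ((n:ℝ)+1) * Real.log lam := by
  have ha : 3 < Real.log lam := log_lam_gt hlam
  have hl2 : (0.6931:ℝ) < Real.log 2 := by have := Real.log_two_gt_d9; linarith
  have hb : Real.log 2 ≤ Real.log ((n:ℝ)+1) := by
    refine Real.log_le_log (by norm_num) ?_
    have : (1:ℝ) ≤ (n:ℝ) := by exact_mod_cast hn
    linarith
  nlinarith

end S9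
namespace S9

variable {dd : ℕ} {α : Fin dd → ℕ} {D : ℕ}

lemma gcnt_pos_elim {𝔉 : Finset (Tile dd)} {S : Set (Fin dd → ℝ)} {y : Fin dd → ℝ}
    (h : 0 < gcnt α D 𝔉 S y) : ∃ p ∈ 𝔉, y ∈ p.I.toSet α D ∧ p.I.toSet α D ⊆ S := by
  classical
  have : (𝔉.filter fun p => y ∈ p.I.toSet α D ∧ p.I.toSet α D ⊆ S).Nonempty :=
    Finset.card_pos.mp h
  obtain ⟨p, hp⟩ := this
  rw [Finset.mem_filter] at hp
  exact ⟨p, hp.1, hp.2⟩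

lemma gcnt_le_of_cube (hD : 2 ≤ D) {𝔉 : Finset (Tile dd)} {J : DCube dd} {x y : Fin dd → ℝ}
    (hxJ : x ∈ J.toSet α D) (hyJ : y ∈ J.toSet α D)
    (hsc : ∀ p ∈ 𝔉, J.s ≤ p.I.s) :
    gcnt α D 𝔉 Set.univ x ≤ gcnt α D 𝔉 Set.univ y := by
  classical
  refine Finset.card_le_card ?_
  intro p hp
  rw [Finset.mem_filter] at *
  refine ⟨hp.1, ?_, Set.subset_univ _⟩
  exact toSet_subset_of_mem hD (hsc p hp.1) hxJ hp.2.1 hyJ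

end S9

open S9 in
theorem statement9 (dd d : ℕ) (α : Fin dd → ℕ) (hα : ∀ i, 0 < α i) (hmono : Monotone α) :
    ∃ C : ℝ, 0 < C ∧
      ∀ (D : ℕ), 2 ≤ D → (∃ k : ℕ, D = 2 ^ k) →
      ∀ (s_min s_max : ℤ), s_min ≤ s_max → s_max ≤ 0 →
      ∀ 𝔓 : Set (Tile dd), GoodCollection α D d s_min s_max 𝔓 →
      ∀ Qx : (Fin dd → ℝ) → MvPolynomial (Fin dd) ℝ,
        (∀ x, Qx x ∈ QSpace dd d) → (Set.range Qx).Finite →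
        (∀ p ∈ 𝔓, MeasurableSet (Ebar α D Qx p)) →
      ∀ lam : ℝ, 10 * Real.exp 1 < lam →
      ∃ E₁ : Set (Fin dd → ℝ), E₁ ⊆ unitCube dd ∧
        (∃ 𝒞 : Set (DCube dd), (∀ J ∈ 𝒞, J.valid α D) ∧
          (∀ J ∈ 𝒞, ∀ J' ∈ 𝒞, J ≠ J' → J.toSet α D ∩ J'.toSet α D = ∅) ∧
          E₁ = ⋃ J ∈ 𝒞, J.toSet α D) ∧
        volume E₁ ≤ ENNReal.ofReal (C / lam ^ 2) ∧
        (∀ n : ℕ, 1 ≤ n → ∀ x : Fin dd → ℝ, ∀ F : Finset (Tile dd),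
          (∀ p ∈ F, p ∈ MaxTiles α D Qx 𝔓 E₁ n ∧ x ∈ p.I.toSet α D) →
          (F.card : ℝ) ≤ C * 2 ^ n * Real.log (n + 1) * Real.log lam) := by
  classical
  refine ⟨1000, by norm_num, ?_⟩
  intro D hD hDpow s_min s_max hsmm hsmax 𝔓 hP Qx hQx hQxfin hQmeas lam hlam
  have hloglam : (0:ℝ) < Real.log lam := by linarith [log_lam_gt hlam]
  rcases Nat.eq_zero_or_pos dd with hdd | hddpos
  · -- degenerate dimension 0 case
    subst hdd
    refine ⟨∅, by simp, ⟨∅, by simp, by simp, by simp⟩, by simp, ?_⟩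
    intro n hn x F hF
    have hcard : F.card ≤ 2 ^ n :=
      card_le_pow_dd0 hD hP hQmeas F (fun p hp => (hF p hp).1)
    have h1 : (F.card : ℝ) ≤ (2:ℝ) ^ n := by exact_mod_cast hcard
    have h2 := one_le_target hlam n hn
    have hpow : (0:ℝ) < 2 ^ n := by positivity
    calc (F.card : ℝ) ≤ 2 ^ n := h1
      _ = 2 ^ n * 1 := by ring
      _ ≤ 2 ^ n * (1000 * Real.log ((n:ℝ) + 1) * Real.log lam) :=
          mul_le_mul_of_nonneg_left h2 hpow.le
      _ = 1000 * 2 ^ n * Real.log ((n:ℝ) + 1) * Real.log lam := by ring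
  · -- main case
    set i0 : Fin dd := ⟨0, hddpos⟩ with hi0
    have hsmin0 : s_min ≤ 0 := hsmm.trans hsmax
    have hfin : ∀ n : ℕ, (MaxTiles α D Qx 𝔓 (∅ : Set (Fin dd → ℝ)) n).Finite :=
      fun n => finite_M0 hD hP hQmeas
    set Fn : ℕ → Finset (Tile dd) := fun n => (hfin n).toFinset with hFn
    have hFnmem : ∀ (n : ℕ) (p : Tile dd),
        p ∈ Fn n ↔ p ∈ MaxTiles α D Qx 𝔓 (∅ : Set (Fin dd → ℝ)) n :=
      fun n p => Set.Finite.mem_toFinset _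
    set kf : ℕ → ℕ := fun n => ⌈Real.logb 2 ((lam * ((n:ℝ)+1))^2)⌉₊ with hkf
    set E₁ : Set (Fin dd → ℝ) :=
      ⋃ j : ℕ, {y | kf (j+1) * 2 ^ ((j+1)+1) < gcnt α D (Fn (j+1)) Set.univ y} with hE₁def
    have hscales : ∀ (n : ℕ), ∀ p ∈ Fn n, s_min ≤ p.I.s := by
      intro n p hp
      have hpP : p ∈ 𝔓 := denseTiles_subset ((hFnmem n p).mp hp).1
      exact (hP.1 p hpP).2.1
    have hLevsub : ∀ j : ℕ,
        {y | kf (j+1) * 2 ^ ((j+1)+1) < gcnt α D (Fn (j+1)) Set.univ y} ⊆ unitCube dd := by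
      intro j y hy
      rw [Set.mem_setOf_eq] at hy
      obtain ⟨p, hp𝔉, hyp, -⟩ := gcnt_pos_elim (lt_of_le_of_lt (Nat.zero_le _) hy)
      have hpP : p ∈ 𝔓 := denseTiles_subset ((hFnmem _ p).mp hp𝔉).1
      exact toSet_subset_unitCube hD (tile_valid hP hpP) hyp
    have hE₁unit : E₁ ⊆ unitCube dd := Set.iUnion_subset hLevsub
    refine ⟨E₁, hE₁unit, ?_, ?_, ?_⟩
    · -- E₁ is a disjoint union of valid cubes
      refine ⟨{J : DCube dd | J.s = s_min ∧ J.valid α D ∧ J.toSet α D ⊆ E₁},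
        fun J hJ => hJ.2.1, ?_, ?_⟩
      · intro J hJ J' hJ' hne
        by_contra hcon
        obtain ⟨y, hy, hy'⟩ := Set.nonempty_iff_ne_empty.mpr hcon
        have h1 : J.toSet α D ⊆ J'.toSet α D :=
          toSet_subset_of_mem hD (by rw [hJ.1, hJ'.1]) hy hy'
        have h2 : J'.toSet α D ⊆ J.toSet α D :=
          toSet_subset_of_mem hD (by rw [hJ.1, hJ'.1]) hy' hy
        exact hne (toSet_inj hD hα i0 (subset_antisymm h1 h2))
      · refine subset_antisymm ?_ (Set.iUnion₂_subset fun J hJ => hJ.2.2)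
        intro z hz
        have hzU : z ∈ unitCube dd := hE₁unit hz
        obtain ⟨J, hJs, hJvalid, hzJ⟩ := exists_cube (α := α) hD s_min hsmin0 hzU
        have hJE : J.toSet α D ⊆ E₁ := by
          intro y hyJ
          rw [hE₁def, Set.mem_iUnion] at hz ⊢
          obtain ⟨j, hj⟩ := hz
          refine ⟨j, ?_⟩
          rw [Set.mem_setOf_eq] at hj ⊢
          refine lt_of_lt_of_le hj ?_
          refine gcnt_le_of_cube hD hzJ hyJ ?_
          intro p hp
          rw [hJs]
          exact hscales (j+1) p hp
        exact Set.mem_biUnion ⟨hJs, hJvalid, hJE⟩ hzJ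
    · -- measure bound
      have hmeasE : volume E₁ ≤
          ∑' j : ℕ, volume {y | kf (j+1) * 2 ^ ((j+1)+1) < gcnt α D (Fn (j+1)) Set.univ y} := by
        rw [hE₁def]
        exact measure_iUnion_le _
      have hterm : ∀ j : ℕ,
          volume {y | kf (j+1) * 2 ^ ((j+1)+1) < gcnt α D (Fn (j+1)) Set.univ y} ≤
            ENNReal.ofReal (1/lam^2) * ENNReal.ofReal (1/((j:ℝ)+2)^2) := by
        intro j
        have hjn := jn hD hα i0 hP hQmeas (Fn (j+1))
          (fun p hp => (hFnmem (j+1) p).mp hp) (kf (j+1)) Set.univ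
        rw [Set.univ_inter, volume_unitCube, mul_one] at hjn
        refine hjn.trans ?_
        have hke := kf_pow_le hlam (j+1)
        have hc : (((j+1:ℕ):ℝ)) + 1 = (j:ℝ) + 2 := by push_cast; ring
        rw [← ENNReal.ofReal_mul (by positivity), hkf, ← hc]
        exact hke
      calc volume E₁
          ≤ ∑' j : ℕ, volume {y | kf (j+1) * 2 ^ ((j+1)+1) <
              gcnt α D (Fn (j+1)) Set.univ y} := hmeasE
        _ ≤ ∑' j : ℕ, ENNReal.ofReal (1/lam^2) * ENNReal.ofReal (1/((j:ℝ)+2)^2) :=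
            ENNReal.tsum_le_tsum hterm
        _ = ENNReal.ofReal (1/lam^2) * ∑' j : ℕ, ENNReal.ofReal (1/((j:ℝ)+2)^2) :=
            ENNReal.tsum_mul_left
        _ ≤ ENNReal.ofReal (1/lam^2) * 1 := mul_le_mul_right sum_inv_sq_le_one _
        _ ≤ ENNReal.ofReal (1000 / lam^2) := by
            rw [mul_one]
            refine ENNReal.ofReal_le_ofReal ?_
            have hlampos : (0:ℝ) < lam := by nlinarith [Real.exp_pos 1]
            rw [div_le_div_iff₀ (by positivity) (by positivity)]
            nlinarith
    · -- counting bound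
      intro n hn x F hF
      rcases F.eq_empty_or_nonempty with rfl | hFne
      · simp only [Finset.card_empty, Nat.cast_zero]
        have h2 := one_le_target hlam n hn
        have hpow : (0:ℝ) < 2 ^ n := by positivity
        nlinarith
      · obtain ⟨pstar, hpstarF, hpstarmin⟩ := F.exists_min_image (fun p => p.I.s) hFne
        have hpstarM := (hF pstar hpstarF).1
        have hgood : ¬ pstar.I.toSet α D ⊆ E₁ := hpstarM.1.1.2
        obtain ⟨y, hyI, hyE⟩ := Set.not_subset.mp hgood
        have hyall : ∀ p ∈ F, y ∈ p.I.toSet α D := fun p hp =>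
          toSet_subset_of_mem hD (hpstarmin p hp) (hF pstar hpstarF).2 (hF p hp).2 hyI
        have hex : ∀ p ∈ F, ∃ q, q ∈ MaxTiles α D Qx 𝔓 (∅ : Set (Fin dd → ℝ)) n ∧
            Tile.le α D p q := by
          intro p hp
          have hdense0 : p ∈ denseTiles α D Qx 𝔓 (∅ : Set (Fin dd → ℝ)) n :=
            (mem_denseTiles_empty hD).mpr ⟨(hF p hp).1.1.1.1, (hF p hp).1.1.2⟩
          obtain ⟨q, hq, hle⟩ := exists_max_above hD hα i0 hP hdense0
          exact ⟨q, hq, hle⟩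
        set f : Tile dd → Tile dd := fun p =>
          if h : ∃ q, q ∈ MaxTiles α D Qx 𝔓 (∅ : Set (Fin dd → ℝ)) n ∧ Tile.le α D p q
          then h.choose else p with hfdef
        have hf : ∀ p ∈ F, f p ∈ MaxTiles α D Qx 𝔓 (∅ : Set (Fin dd → ℝ)) n ∧
            Tile.le α D p (f p) := by
          intro p hp
          have h := hex p hp
          rw [hfdef]
          simp only [dif_pos h]
          exact h.choose_spec
        have hcard : F.card ≤ gcnt α D (Fn n) Set.univ y := by
          refine Finset.card_le_card_of_injOn f ?_ ?_
          · intro p hp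
            rw [Finset.mem_coe, Finset.mem_filter]
            obtain ⟨hq, hle⟩ := hf p hp
            exact ⟨(hFnmem n (f p)).mpr hq, hle.1 (hyall p hp), Set.subset_univ _⟩
          · intro p1 hp1 p2 hp2 heq
            by_contra hne
            rw [Finset.mem_coe] at hp1 hp2
            have hQd := Q_disjoint_of_max hD hP (hF p1 hp1).1 (hF p2 hp2).1 hne
              (hF p1 hp1).2 (hF p2 hp2).2
            obtain ⟨hq1, hle1⟩ := hf p1 hp1
            obtain ⟨hq2, hle2⟩ := hf p2 hp2
            have hqP : f p1 ∈ 𝔓 := denseTiles_subset hq1.1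
            have hc1 : (f p1).c ∈ p1.Q := hle1.2 (central_mem hP hqP)
            have hc2 : (f p1).c ∈ p2.Q := by
              rw [heq]
              exact hle2.2 (central_mem hP (denseTiles_subset hq2.1))
            have : (f p1).c ∈ p1.Q ∩ p2.Q := ⟨hc1, hc2⟩
            rw [hQd] at this
            exact this
        have hyLev : ¬ (kf n * 2 ^ (n+1) < gcnt α D (Fn n) Set.univ y) := by
          intro hcon
          apply hyE
          rw [hE₁def, Set.mem_iUnion]
          refine ⟨n - 1, ?_⟩
          have hnn : n - 1 + 1 = n := Nat.succ_pred_eq_of_pos hn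
          rw [hnn]
          exact hcon
        push_neg at hyLev
        have hcard2 : (F.card : ℝ) ≤ (kf n : ℝ) * 2 ^ (n+1) := by
          have : F.card ≤ kf n * 2 ^ (n+1) := hcard.trans hyLev
          exact_mod_cast this
        have hk := kf_le hlam n hn
        calc (F.card : ℝ) ≤ (kf n : ℝ) * 2 ^ (n+1) := hcard2
          _ = (2 * (kf n : ℝ)) * 2 ^ n := by ring
          _ ≤ (1000 * Real.log ((n:ℝ)+1) * Real.log lam) * 2 ^ n := by
              refine mul_le_mul_of_nonneg_right hk (by positivity)
          _ = 1000 * 2 ^ n * Real.log ((n:ℝ)+1) * Real.log lam := by ring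

end
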